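/- Let A be a d₁×d₁ and B a d₂×d₂ nonzero complex matrix such that the Kronecker product A ⊗ B is skew-symmetric, i.e., (A ⊗ B)ᵀ = -(A ⊗ B). Then either A is symmetric (Aᵀ = A) and B is skew-symmetric (Bᵀ = -B), or A is skew-symmetric and B is symmetric. -/

import Mathlib

open Matrix
open scoped Kronecker

/-- If `A` and `B` are nonzero complex matrices whose Kronecker product `A ⊗ B` is
skew-symmetric, then either `A` is symmetric and `B` is skew-symmetric, or `A` is
skew-symmetric and `B` is symmetric. -/
theorem stmt7 (d₁ d₂ : ℕ) (A : Matrix (Fin d₁) (Fin d₁) ℂ) (B : Matrix (Fin d₂) (Fin d₂) ℂ)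
    (hA : A ≠ 0) (hB : B ≠ 0) (h : (A ⊗ₖ B)ᵀ = -(A ⊗ₖ B)) :
    (Aᵀ = A ∧ Bᵀ = -B) ∨ (Aᵀ = -A ∧ Bᵀ = B) := by
  have heq : ∀ i j k l, A j i * B l k = -(A i j * B k l) := by
    intro i j k l
    have := congrFun (congrFun h (i, k)) (j, l)
    simpa [Matrix.kroneckerMap_apply] using this
  obtain ⟨i₀, j₀, hA0⟩ : ∃ i j, A i j ≠ 0 := by
    by_contra hc
    push_neg at hc
    exact hA (Matrix.ext fun i j => hc i j)
  obtain ⟨k₀, l₀, hB0⟩ : ∃ k l, B k l ≠ 0 := by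
    by_contra hc
    push_neg at hc
    exact hB (Matrix.ext fun k l => hc k l)
  set c : ℂ := -B l₀ k₀ / B k₀ l₀ with hc
  set c' : ℂ := -A j₀ i₀ / A i₀ j₀ with hc'
  have hAc : ∀ i j, A j i = c * A i j := by
    intro i j
    have := heq j i k₀ l₀
    rw [hc, div_mul_eq_mul_div, eq_div_iff hB0]
    linear_combination this
  have hBc : ∀ k l, B l k = c' * B k l := by
    intro k l
    have := heq j₀ i₀ k l
    rw [hc', div_mul_eq_mul_div, eq_div_iff hA0]
    linear_combination this
  have e1 : A j₀ i₀ = c * A i₀ j₀ := hAc i₀ j₀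
  have e2 : B l₀ k₀ = c' * B k₀ l₀ := hBc k₀ l₀
  have h1 := heq i₀ j₀ k₀ l₀
  have hkey : (c * c' + 1) * (A i₀ j₀ * B k₀ l₀) = 0 := by
    linear_combination h1 - B l₀ k₀ * e1 - (c * A i₀ j₀) * e2
  have hcc' : c * c' = -1 := by
    rcases mul_eq_zero.mp hkey with h2 | h2
    · linear_combination h2
    · exact absurd h2 (mul_ne_zero hA0 hB0)
  have hc2 : c * c = 1 := by
    have h1' : A i₀ j₀ = c * (c * A i₀ j₀) := by
      calc A i₀ j₀ = c * A j₀ i₀ := hAc j₀ i₀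
        _ = c * (c * A i₀ j₀) := by rw [hAc i₀ j₀]
    rcases mul_eq_zero.mp (show (c * c - 1) * A i₀ j₀ = 0 by linear_combination -h1') with
      h2 | h2
    · linear_combination h2
    · exact absurd h2 hA0
  rcases mul_self_eq_one_iff.mp hc2 with h1 | h1
  · left
    have hc'val : c' = -1 := by
      have := hcc'; rw [h1, one_mul] at this; exact this
    constructor
    · ext i j
      simp only [Matrix.transpose_apply]
      rw [hAc i j, h1]; ring
    · ext k l
      simp only [Matrix.transpose_apply, Matrix.neg_apply]
      rw [hBc k l, hc'val]; ring
  · right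
    have hc'val : c' = 1 := by
      have := hcc'; rw [h1] at this
      linear_combination -this
    constructor
    · ext i j
      simp only [Matrix.transpose_apply, Matrix.neg_apply]
      rw [hAc i j, h1]; ring
    · ext k l
      simp only [Matrix.transpose_apply]
      rw [hBc k l, hc'val]; ring
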